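/- Functional equation for the compressor: for real β with 1 < β ≤ 2 and every y with 0 ≤ y < β/2, one has cpr_β(y/β) + cpr_β(1/2 + y/β) = 1/2 + cpr_β(y). -/

import Mathlib

/-- The beta shift map `T_β : [0,1] → [0,1]`. -/
noncomputable def betaShift (β : ℝ) (x : ℝ) : ℝ :=
  if x < 1/2 then β * x else β * (x - 1/2)

/-- The digit sequence `k_n(x)` of the beta shift: 0 if the n-th iterate is below 1/2, else 1. -/
noncomputable def betaDigit (β : ℝ) (n : ℕ) (x : ℝ) : ℝ :=
  if (betaShift β)^[n] x < 1/2 then 0 else 1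

/-- The compressor function `cpr_β(y) = Σ_n k_n(y) 2^{-(n+1)}`. -/
noncomputable def cpr (β : ℝ) (y : ℝ) : ℝ := ∑' n : ℕ, betaDigit β n y / 2 ^ (n + 1)

lemma cpr_summable (β y : ℝ) : Summable (fun n : ℕ => betaDigit β n y / 2 ^ (n + 1)) := by
  have hsum : Summable (fun n : ℕ => (1/2 : ℝ) ^ (n + 1)) :=
    (summable_geometric_of_lt_one (by norm_num) (by norm_num)).comp_injective
      (add_left_injective 1)
  refine hsum.of_nonneg_of_le (fun n => ?_) (fun n => ?_)
  · unfold betaDigit; split <;> positivity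
  · unfold betaDigit
    rw [one_div, inv_pow, ← one_div]
    split
    · rw [zero_div]; positivity
    · rw [one_div]

lemma cpr_halve (β x : ℝ) : cpr β x = betaDigit β 0 x / 2 + cpr β (betaShift β x) / 2 := by
  unfold cpr
  rw [Summable.tsum_eq_zero_add (cpr_summable β x)]
  congr 1
  · norm_num
  · rw [← tsum_div_const]
    congr 1 with n
    have : betaDigit β (n + 1) x = betaDigit β n (betaShift β x) := by
      unfold betaDigit
      rw [Function.iterate_succ_apply]
    rw [this]
    ring

/-- functional equation for the compressor. -/
theorem compressor_functional_equation (β : ℝ) (hβ1 : 1 < β) (hβ2 : β ≤ 2)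
    (y : ℝ) (hy0 : 0 ≤ y) (hy1 : y < β / 2) :
    cpr β (y / β) + cpr β (1/2 + y / β) = 1/2 + cpr β y := by
  have hβ0 : (0:ℝ) < β := by linarith
  have h1 : y / β < 1/2 := by rw [div_lt_iff₀ hβ0]; linarith
  have h2 : ¬ (1/2 + y / β < 1/2) := by
    have : 0 ≤ y / β := by positivity
    linarith
  have hs1 : betaShift β (y / β) = y := by
    rw [betaShift, if_pos h1, mul_div_cancel₀ _ hβ0.ne']
  have hs2 : betaShift β (1/2 + y / β) = y := by
    rw [betaShift, if_neg h2]
    rw [show 1/2 + y/β - 1/2 = y/β by ring, mul_div_cancel₀ _ hβ0.ne']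
  have hd1 : betaDigit β 0 (y / β) = 0 := by rw [betaDigit]; simp only [Function.iterate_zero, id]; exact if_pos h1
  have hd2 : betaDigit β 0 (1/2 + y / β) = 1 := by rw [betaDigit]; simp only [Function.iterate_zero, id]; exact if_neg h2
  rw [cpr_halve β (y/β), cpr_halve β (1/2 + y/β), hs1, hs2, hd1, hd2]
  ring
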